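/- Let f : ℝ → ℝ be a nonnegative nondecreasing function and let G be a finite simple bipartite graph (every edge joins the two sides of a fixed bipartition) with n vertices and average degree d̄ = 2|E(G)|/n ≥ 16. If every pair of distinct vertices of G has f-sparse sub-bineighborhoods, then d̄³ ≤ 2^{11} · n · f(2·d̄). -/

import Mathlib

/-- The number of edges of `G` with one endpoint in `U` and the other endpoint in `W`
(counted via ordered pairs; for disjoint `U`, `W` each such edge is counted once). -/
noncomputable def edgesBetween {V : Type*} (G : SimpleGraph V) (U W : Set V) : ℕ :=
  {p : V × V | p.1 ∈ U ∧ p.2 ∈ W ∧ G.Adj p.1 p.2}.ncard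

open Finset

namespace SparseAux
set_option linter.unusedSectionVars false

variable {V : Type} [Fintype V] [DecidableEq V] (G : SimpleGraph V) [DecidableRel G.Adj]

/-- Finset version of `edgesBetween`. -/
def eBF (U W : Finset V) : ℕ := ((U ×ˢ W).filter fun p => G.Adj p.1 p.2).card

lemma edgesBetween_coe (U W : Finset V) : edgesBetween G ↑U ↑W = eBF G U W := by
  have h : {p : V × V | p.1 ∈ (U : Set V) ∧ p.2 ∈ (W : Set V) ∧ G.Adj p.1 p.2}
      = (((U ×ˢ W).filter fun p => G.Adj p.1 p.2 : Finset (V × V)) : Set (V × V)) := by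
    ext p; simp [and_assoc]
  rw [edgesBetween, h, Set.ncard_coe_finset, eBF]

lemma eBF_eq_sum (U W : Finset V) :
    eBF G U W = ∑ x ∈ U, (W.filter fun y => G.Adj x y).card := by
  rw [eBF, card_filter, Finset.sum_product]
  exact Finset.sum_congr rfl fun x _ => (card_filter _ _).symm

lemma eBF_eq_sum_right (U W : Finset V) :
    eBF G U W = ∑ y ∈ W, (U.filter fun x => G.Adj x y).card := by
  rw [eBF, card_filter, Finset.sum_product_right]
  exact Finset.sum_congr rfl fun y _ => (card_filter _ _).symm

lemma eBF_union_left {U₁ U₂ : Finset V} (h : Disjoint U₁ U₂) (W : Finset V) :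
    eBF G (U₁ ∪ U₂) W = eBF G U₁ W + eBF G U₂ W := by
  simp [eBF_eq_sum, Finset.sum_union h]

lemma eBF_union_right (U : Finset V) {W₁ W₂ : Finset V} (h : Disjoint W₁ W₂) :
    eBF G U (W₁ ∪ W₂) = eBF G U W₁ + eBF G U W₂ := by
  simp [eBF_eq_sum_right, Finset.sum_union h]

/-- ceiling division -/
def cdiv (t a : ℕ) : ℕ := (a + t - 1) / t

lemma cdiv_mono (t : ℕ) {a b : ℕ} (h : a ≤ b) : cdiv t a ≤ cdiv t b :=
  Nat.div_le_div_right (by omega)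

lemma cdiv_self {t : ℕ} (ht : 0 < t) : cdiv t t = 1 := by
  rw [cdiv, show t + t - 1 = (t - 1) + t by omega, Nat.add_div_right _ ht,
    Nat.div_eq_of_lt (by omega)]

lemma cdiv_sub {t a : ℕ} (ht : 0 < t) (h : t ≤ a) : cdiv t a = cdiv t (a - t) + 1 := by
  rw [cdiv, cdiv, show a + t - 1 = ((a - t) + t - 1) + t by omega, Nat.add_div_right _ ht]

lemma one_le_cdiv {t a : ℕ} (ht : 0 < t) (h : 1 ≤ a) : 1 ≤ cdiv t a := by
  rw [cdiv, Nat.one_le_div_iff ht]; omega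

lemma cdiv_cast_le {t a : ℕ} (ht : 0 < t) : (cdiv t a : ℝ) ≤ a / t + 1 := by
  have h1 : (cdiv t a : ℝ) ≤ ((a + t - 1 : ℕ) : ℝ) / t := Nat.cast_div_le
  have h2 : ((a + t - 1 : ℕ) : ℝ) = (a : ℝ) + t - 1 := by
    push_cast [Nat.cast_sub (show 1 ≤ a + t by omega)]; ring
  rw [h2] at h1
  have ht' : (0 : ℝ) < t := by exact_mod_cast ht
  refine h1.trans ?_
  rw [div_le_iff₀ ht']
  have hc : (a:ℝ)/t*t = a := div_mul_cancel₀ _ (ne_of_gt ht')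
  have : (1:ℝ) ≤ t := by exact_mod_cast ht
  nlinarith


lemma chunk (f : ℝ → ℝ) (hf0 : ∀ x, 0 ≤ f x) (hfmono : Monotone f)
    (t : ℕ) (ht : 0 < t) (u v : V)
    (hsp : ∀ U W : Finset V, ↑U ⊆ G.neighborSet u \ {v} → ↑W ⊆ G.neighborSet v \ {u} →
      Disjoint U W → (eBF G U W : ℝ) ≤ f ((U.card + W.card : ℕ) : ℝ)) :
    ∀ (N : ℕ) (U W : Finset V), U.card + W.card ≤ N →
      ↑U ⊆ G.neighborSet u \ {v} → ↑W ⊆ G.neighborSet v \ {u} → Disjoint U W →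
      (eBF G U W : ℝ) ≤ (cdiv t U.card : ℝ) * (cdiv t W.card : ℝ) * f (2 * (t : ℝ)) := by
  intro N
  induction N with
  | zero =>
    intro U W hcard _ _ _
    have hU : U = ∅ := card_eq_zero.mp (by omega)
    have h0 : eBF G U W = 0 := by simp [eBF, hU]
    rw [h0]
    have := hf0 (2 * (t:ℝ))
    push_cast
    positivity
  | succ N ih =>
    intro U W hcard hUsub hWsub hdis
    by_cases hUt : U.card ≤ t
    · by_cases hWt : W.card ≤ t
      · -- base case
        rcases eq_or_ne U ∅ with hU | hU
        · have h0 : eBF G U W = 0 := by simp [eBF, hU]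
          rw [h0]; push_cast
          have := hf0 (2 * (t:ℝ))
          positivity
        rcases eq_or_ne W ∅ with hW | hW
        · have h0 : eBF G U W = 0 := by simp [eBF, hW]
          rw [h0]; push_cast
          have := hf0 (2 * (t:ℝ))
          positivity
        have h1 : (eBF G U W : ℝ) ≤ f ((U.card + W.card : ℕ) : ℝ) := hsp U W hUsub hWsub hdis
        have h2 : f ((U.card + W.card : ℕ) : ℝ) ≤ f (2 * (t:ℝ)) := by
          apply hfmono
          push_cast
          have : (U.card : ℝ) ≤ t := by exact_mod_cast hUt
          have : (W.card : ℝ) ≤ t := by exact_mod_cast hWt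
          linarith
        have hcu : (1:ℝ) ≤ (cdiv t U.card : ℝ) := by
          exact_mod_cast one_le_cdiv ht (card_pos.mpr (nonempty_iff_ne_empty.mpr hU))
        have hcw : (1:ℝ) ≤ (cdiv t W.card : ℝ) := by
          exact_mod_cast one_le_cdiv ht (card_pos.mpr (nonempty_iff_ne_empty.mpr hW))
        have hf : 0 ≤ f (2 * (t:ℝ)) := hf0 _
        nlinarith [mul_nonneg (mul_nonneg (sub_nonneg.mpr hcu) (sub_nonneg.mpr hcw)) hf,
          mul_nonneg (sub_nonneg.mpr hcu) hf, mul_nonneg (sub_nonneg.mpr hcw) hf]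
      · -- split W
        push_neg at hWt
        obtain ⟨W₁, hW₁sub, hW₁card⟩ := Finset.exists_subset_card_eq hWt.le
        set W₂ := W \ W₁ with hW₂
        have hdisj : Disjoint W₁ W₂ := Finset.disjoint_sdiff
        have hunion : W₁ ∪ W₂ = W := Finset.union_sdiff_of_subset hW₁sub
        have hcard₂ : W₂.card = W.card - t := by
          rw [hW₂, card_sdiff_of_subset hW₁sub, hW₁card]
        have hsplit : eBF G U W = eBF G U W₁ + eBF G U W₂ := by
          rw [← hunion, eBF_union_right G U hdisj]
        have hsub1 : (↑W₁ : Set V) ⊆ G.neighborSet v \ {u} :=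
          Set.Subset.trans (Finset.coe_subset.mpr hW₁sub) hWsub
        have hsub2 : (↑W₂ : Set V) ⊆ G.neighborSet v \ {u} :=
          Set.Subset.trans (Finset.coe_subset.mpr (sdiff_subset)) hWsub
        have ih1 := ih U W₁ (by omega) hUsub hsub1 (hdis.mono_right hW₁sub)
        have ih2 := ih U W₂ (by omega) hUsub hsub2 (hdis.mono_right (sdiff_subset))
        have e1 : cdiv t W₁.card = 1 := by rw [hW₁card]; exact cdiv_self ht
        have e2 : cdiv t W.card = cdiv t W₂.card + 1 := by
          rw [cdiv_sub ht hWt.le, hcard₂]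
        have e1' : (cdiv t W₁.card : ℝ) = 1 := by exact_mod_cast e1
        have e2' : (cdiv t W.card : ℝ) = (cdiv t W₂.card : ℝ) + 1 := by exact_mod_cast e2
        have hU0 : (0:ℝ) ≤ (cdiv t U.card : ℝ) := by positivity
        have hf : 0 ≤ f (2 * (t:ℝ)) := hf0 _
        rw [hsplit, e2']
        push_cast
        rw [e1'] at ih1
        nlinarith
    · -- split U
      push_neg at hUt
      obtain ⟨U₁, hU₁sub, hU₁card⟩ := Finset.exists_subset_card_eq hUt.le
      set U₂ := U \ U₁ with hU₂
      have hdisj : Disjoint U₁ U₂ := Finset.disjoint_sdiff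
      have hunion : U₁ ∪ U₂ = U := Finset.union_sdiff_of_subset hU₁sub
      have hcard₂ : U₂.card = U.card - t := by
        rw [hU₂, card_sdiff_of_subset hU₁sub, hU₁card]
      have hsplit : eBF G U W = eBF G U₁ W + eBF G U₂ W := by
        rw [← hunion, eBF_union_left G hdisj]
      have hsub1 : (↑U₁ : Set V) ⊆ G.neighborSet u \ {v} :=
        Set.Subset.trans (Finset.coe_subset.mpr hU₁sub) hUsub
      have hsub2 : (↑U₂ : Set V) ⊆ G.neighborSet u \ {v} :=
        Set.Subset.trans (Finset.coe_subset.mpr (sdiff_subset)) hUsub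
      have ih1 := ih U₁ W (by omega) hsub1 hWsub (hdis.mono_left hU₁sub)
      have ih2 := ih U₂ W (by omega) hsub2 hWsub (hdis.mono_left (sdiff_subset))
      have e1 : cdiv t U₁.card = 1 := by rw [hU₁card]; exact cdiv_self ht
      have e2 : cdiv t U.card = cdiv t U₂.card + 1 := by
        rw [cdiv_sub ht hUt.le, hcard₂]
      have e1' : (cdiv t U₁.card : ℝ) = 1 := by exact_mod_cast e1
      have e2' : (cdiv t U.card : ℝ) = (cdiv t U₂.card : ℝ) + 1 := by exact_mod_cast e2
      have hW0 : (0:ℝ) ≤ (cdiv t W.card : ℝ) := by positivity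
      have hf : 0 ≤ f (2 * (t:ℝ)) := hf0 _
      rw [hsplit, e2']
      push_cast
      rw [e1'] at ih1
      nlinarith


lemma eBF_zero_of_bip (s : Set V) (hbip : ∀ u v : V, G.Adj u v → (u ∈ s ↔ v ∉ s))
    {u v w : V} (huw : G.Adj u w) (hvw : G.Adj v w) :
    eBF G ((G.neighborFinset u).erase v) ((G.neighborFinset v).erase u) = 0 := by
  rw [eBF, card_eq_zero, filter_eq_empty_iff]
  rintro ⟨x, y⟩ hxy hadj
  simp only [mem_product, mem_erase, SimpleGraph.mem_neighborFinset] at hxy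
  have h1 := hbip u x hxy.1.2
  have h2 := hbip v y hxy.2.2
  have h3 := hbip x y hadj
  have h4 := hbip u w huw
  have h5 := hbip v w hvw
  tauto

lemma pair_bound (f : ℝ → ℝ) (hf0 : ∀ x, 0 ≤ f x) (hfmono : Monotone f)
    (t : ℕ) (ht : 0 < t) (s : Set V)
    (hbip : ∀ u v : V, G.Adj u v → (u ∈ s ↔ v ∉ s))
    (u v : V)
    (hsp : ∀ U W : Finset V, ↑U ⊆ G.neighborSet u \ {v} → ↑W ⊆ G.neighborSet v \ {u} →
      Disjoint U W → (eBF G U W : ℝ) ≤ f ((U.card + W.card : ℕ) : ℝ)) :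
    (eBF G ((G.neighborFinset u).erase v) ((G.neighborFinset v).erase u) : ℝ) ≤
      (cdiv t (G.degree u) : ℝ) * (cdiv t (G.degree v) : ℝ) * f (2 * (t : ℝ)) := by
  set U := (G.neighborFinset u).erase v with hU
  set W := (G.neighborFinset v).erase u with hW
  have hUsub : (↑U : Set V) ⊆ G.neighborSet u \ {v} := by
    rw [hU, coe_erase, SimpleGraph.neighborFinset_def, Set.coe_toFinset]
  have hWsub : (↑W : Set V) ⊆ G.neighborSet v \ {u} := by
    rw [hW, coe_erase, SimpleGraph.neighborFinset_def, Set.coe_toFinset]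
  have hf : 0 ≤ f (2 * (t:ℝ)) := hf0 _
  by_cases hdis : Disjoint U W
  · have h1 := chunk G f hf0 hfmono t ht u v hsp (U.card + W.card) U W le_rfl hUsub hWsub hdis
    refine h1.trans ?_
    have hcu : cdiv t U.card ≤ cdiv t (G.degree u) := by
      apply cdiv_mono
      rw [hU]
      exact (card_erase_le).trans (le_of_eq rfl)
    have hcw : cdiv t W.card ≤ cdiv t (G.degree v) := by
      apply cdiv_mono
      rw [hW]
      exact (card_erase_le).trans (le_of_eq rfl)
    have hcu' : (cdiv t U.card : ℝ) ≤ (cdiv t (G.degree u) : ℝ) := by exact_mod_cast hcu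
    have hcw' : (cdiv t W.card : ℝ) ≤ (cdiv t (G.degree v) : ℝ) := by exact_mod_cast hcw
    have h4 : (cdiv t U.card : ℝ) * (cdiv t W.card : ℝ) ≤
        (cdiv t (G.degree u) : ℝ) * (cdiv t (G.degree v) : ℝ) :=
      mul_le_mul hcu' hcw' (by positivity) (by positivity)
    exact mul_le_mul_of_nonneg_right h4 hf
  · rw [Finset.not_disjoint_iff] at hdis
    obtain ⟨w, hw1, hw2⟩ := hdis
    rw [hU, mem_erase, SimpleGraph.mem_neighborFinset] at hw1
    rw [hW, mem_erase, SimpleGraph.mem_neighborFinset] at hw2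
    rw [hU, hW, eBF_zero_of_bip G s hbip hw1.2 hw2.2]
    push_cast
    positivity


lemma eBF_self_eq_sum (A : Finset V) :
    eBF G A A = ∑ x ∈ A, ((G.neighborFinset x) ∩ A).card := by
  rw [eBF_eq_sum]
  refine Finset.sum_congr rfl fun x _ => ?_
  congr 1
  ext y
  simp [SimpleGraph.mem_neighborFinset, and_comm]

lemma deletion (k : ℕ) : ∀ (N : ℕ) (A : Finset V), A.card ≤ N →
    ∃ S, S ⊆ A ∧ (∀ x ∈ S, k + 1 ≤ ((G.neighborFinset x) ∩ S).card) ∧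
      eBF G A A ≤ eBF G S S + 2 * k * A.card := by
  intro N
  induction N with
  | zero =>
    intro A hA
    have : A = ∅ := card_eq_zero.mp (by omega)
    exact ⟨∅, by simp [this]⟩
  | succ N ih =>
    intro A hA
    by_cases hgood : ∀ x ∈ A, k + 1 ≤ ((G.neighborFinset x) ∩ A).card
    · exact ⟨A, Finset.Subset.refl A, hgood, Nat.le_add_right _ _⟩
    · push_neg at hgood
      obtain ⟨x, hxA, hxbad⟩ := hgood
      have hxk : ((G.neighborFinset x) ∩ A).card ≤ k := by omega
      set A' := A.erase x with hA'
      have hcard' : A'.card ≤ N := by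
        rw [hA', card_erase_of_mem hxA]
        omega
      obtain ⟨S, hS1, hS2, hS3⟩ := ih A' hcard'
      refine ⟨S, hS1.trans (erase_subset x A), hS2, ?_⟩
      -- key step : eBF A A ≤ eBF A' A' + 2 * (N x ∩ A).card
      have key : eBF G A A ≤ eBF G A' A' + 2 * ((G.neighborFinset x) ∩ A).card := by
        rw [eBF_self_eq_sum, eBF_self_eq_sum]
        have hsplit : ∑ y ∈ A, ((G.neighborFinset y) ∩ A).card
            = ((G.neighborFinset x) ∩ A).card + ∑ y ∈ A', ((G.neighborFinset y) ∩ A).card := by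
          rw [hA', ← Finset.add_sum_erase A _ hxA]
        rw [hsplit]
        have hterm : ∀ y ∈ A', ((G.neighborFinset y) ∩ A).card ≤
            ((G.neighborFinset y) ∩ A').card + (if x ∈ G.neighborFinset y then 1 else 0) := by
          intro y hy
          have he : (G.neighborFinset y) ∩ A' = ((G.neighborFinset y) ∩ A).erase x := by
            ext z
            rw [hA']
            simp only [mem_inter, mem_erase]
            tauto
          by_cases hxy : x ∈ G.neighborFinset y
          · rw [if_pos hxy, he, card_erase_of_mem (mem_inter.mpr ⟨hxy, hxA⟩)]
            omega
          · rw [if_neg hxy, he, Finset.erase_eq_of_notMem (fun hc => hxy (mem_inter.mp hc).1)]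
            omega
        have hsum2 : ∑ y ∈ A', ((G.neighborFinset y) ∩ A).card ≤
            (∑ y ∈ A', ((G.neighborFinset y) ∩ A').card) +
              ∑ y ∈ A', (if x ∈ G.neighborFinset y then 1 else 0) := by
          rw [← Finset.sum_add_distrib]
          exact Finset.sum_le_sum hterm
        have hsum3 : (∑ y ∈ A', (if x ∈ G.neighborFinset y then 1 else 0))
            ≤ ((G.neighborFinset x) ∩ A).card := by
          rw [← card_filter]
          apply card_le_card
          intro z hz
          simp only [mem_filter, SimpleGraph.mem_neighborFinset] at hz
          rw [hA'] at hz
          exact mem_inter.mpr ⟨SimpleGraph.mem_neighborFinset _ _ _ |>.mpr hz.2.symm,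
            (mem_erase.mp hz.1).2⟩
        omega
      have hAcard : A'.card + 1 = A.card := by
        rw [hA', card_erase_of_mem hxA]
        have : 1 ≤ A.card := card_pos.mpr ⟨x, hxA⟩
        omega
      calc eBF G A A ≤ eBF G A' A' + 2 * ((G.neighborFinset x) ∩ A).card := key
        _ ≤ eBF G S S + 2 * k * A'.card + 2 * k := by
            have := hS3
            have h2 : 2 * ((G.neighborFinset x) ∩ A).card ≤ 2 * k := by omega
            omega
        _ ≤ eBF G S S + 2 * k * A.card := by
            rw [← hAcard]
            ring_nf
            omega


open Classical in
lemma lower_bound (s : Set V) (hbip : ∀ u v : V, G.Adj u v → (u ∈ s ↔ v ∉ s))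
    (S : Finset V) (k : ℕ)
    (hmin : ∀ x ∈ S, k + 1 ≤ ((G.neighborFinset x) ∩ S).card) :
    k * k * eBF G S S ≤
      ∑ p ∈ Finset.univ.offDiag,
        eBF G ((G.neighborFinset p.1).erase p.2) ((G.neighborFinset p.2).erase p.1) := by
  set cond : V × V → V × V → Prop := fun uv xy =>
    xy.1 ∈ S ∧ xy.2 ∈ S ∧ G.Adj xy.1 xy.2 ∧
      uv.1 ∈ ((G.neighborFinset xy.1) ∩ S).erase xy.2 ∧
      uv.2 ∈ ((G.neighborFinset xy.2) ∩ S).erase xy.1 with hcond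
  -- Step 1 : each fiber injects into the corresponding eBF set
  have step1 : ∀ uv : V × V,
      ((univ : Finset (V × V)).filter (cond uv)).card ≤
        eBF G ((G.neighborFinset uv.1).erase uv.2) ((G.neighborFinset uv.2).erase uv.1) := by
    rintro ⟨u, v⟩
    apply card_le_card
    rintro ⟨x, y⟩ hxy
    simp only [hcond, mem_filter, mem_univ, true_and] at hxy
    obtain ⟨hxS, hyS, hadj, hu, hv⟩ := hxy
    simp only [mem_erase, mem_inter, SimpleGraph.mem_neighborFinset] at hu hv
    simp only [eBF, mem_filter, mem_product, mem_erase, SimpleGraph.mem_neighborFinset]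
    exact ⟨⟨⟨fun h => hv.1 h.symm, hu.2.1.symm⟩, ⟨fun h => hu.1 h.symm, hv.2.1.symm⟩⟩, hadj⟩
  -- Step 2 : diagonal fibers are empty
  have step2 : ∀ uv : V × V, uv.1 = uv.2 →
      ((univ : Finset (V × V)).filter (cond uv)) = ∅ := by
    rintro ⟨u, v⟩ huv
    simp only at huv
    subst huv
    rw [filter_eq_empty_iff]
    rintro ⟨x, y⟩ -
    simp only [hcond]
    rintro ⟨hxS, hyS, hadj, hu, hv⟩
    simp only [mem_erase, mem_inter, SimpleGraph.mem_neighborFinset] at hu hv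
    have h1 := hbip x u hu.2.1
    have h2 := hbip y u hv.2.1
    have h3 := hbip x y hadj
    tauto
  -- Step 3 : sum over offDiag = sum over everything
  have step3 : ∑ uv ∈ (univ : Finset (V × V)), ((univ : Finset (V × V)).filter (cond uv)).card
      = ∑ uv ∈ Finset.univ.offDiag, ((univ : Finset (V × V)).filter (cond uv)).card := by
    refine (Finset.sum_subset (Finset.subset_univ _) ?_).symm
    intro uv _ huv
    have : uv.1 = uv.2 := by
      by_contra hne
      exact huv (Finset.mem_offDiag.mpr ⟨mem_univ _, mem_univ _, hne⟩)
    rw [step2 uv this, card_empty]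
  -- Step 4 : swap the two summations
  have step4 : ∑ uv ∈ (univ : Finset (V × V)), ((univ : Finset (V × V)).filter (cond uv)).card
      = ∑ xy ∈ (univ : Finset (V × V)),
          ((univ : Finset (V × V)).filter (fun uv => cond uv xy)).card := by
    simp only [card_filter]
    exact Finset.sum_comm
  -- Step 5 : compute the inner count
  have step5 : ∀ xy : V × V,
      ((univ : Finset (V × V)).filter (fun uv => cond uv xy)).card =
        if xy.1 ∈ S ∧ xy.2 ∈ S ∧ G.Adj xy.1 xy.2 then
          (((G.neighborFinset xy.1) ∩ S).erase xy.2).card *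
            (((G.neighborFinset xy.2) ∩ S).erase xy.1).card
        else 0 := by
    rintro ⟨x, y⟩
    by_cases hb : x ∈ S ∧ y ∈ S ∧ G.Adj x y
    · rw [if_pos hb, ← card_product]
      congr 1
      ext ⟨u, v⟩
      simp only [hcond, mem_filter, mem_univ, true_and, mem_product]
      constructor
      · rintro ⟨-, -, -, h4, h5⟩; exact ⟨h4, h5⟩
      · rintro ⟨h4, h5⟩; exact ⟨hb.1, hb.2.1, hb.2.2, h4, h5⟩
    · rw [if_neg hb, card_eq_zero, filter_eq_empty_iff]
      rintro ⟨u, v⟩ -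
      simp only [hcond]
      tauto
  -- Step 6 : rewrite k*k* eBF S S
  have step6 : k * k * eBF G S S = ∑ xy ∈ (univ : Finset (V × V)),
      if xy.1 ∈ S ∧ xy.2 ∈ S ∧ G.Adj xy.1 xy.2 then k * k else 0 := by
    have hE : eBF G S S =
        ((univ : Finset (V × V)).filter
          (fun xy => xy.1 ∈ S ∧ xy.2 ∈ S ∧ G.Adj xy.1 xy.2)).card := by
      rw [eBF]
      congr 1
      ext ⟨x, y⟩
      simp only [mem_filter, mem_product, mem_univ, true_and]
      tauto
    rw [hE, card_filter, Finset.mul_sum]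
    refine Finset.sum_congr rfl fun xy _ => ?_
    split <;> simp
  -- Step 7 : termwise comparison
  have step7 : ∀ xy : V × V,
      (if xy.1 ∈ S ∧ xy.2 ∈ S ∧ G.Adj xy.1 xy.2 then k * k else 0) ≤
        ((univ : Finset (V × V)).filter (fun uv => cond uv xy)).card := by
    rintro ⟨x, y⟩
    rw [step5]
    by_cases hb : x ∈ S ∧ y ∈ S ∧ G.Adj x y
    · rw [if_pos hb, if_pos hb]
      have hy : y ∈ (G.neighborFinset x) ∩ S :=
        mem_inter.mpr ⟨(SimpleGraph.mem_neighborFinset _ _ _).mpr hb.2.2, hb.2.1⟩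
      have hx : x ∈ (G.neighborFinset y) ∩ S :=
        mem_inter.mpr ⟨(SimpleGraph.mem_neighborFinset _ _ _).mpr hb.2.2.symm, hb.1⟩
      have h1 : k ≤ (((G.neighborFinset x) ∩ S).erase y).card := by
        rw [card_erase_of_mem hy]
        have := hmin x hb.1
        omega
      have h2 : k ≤ (((G.neighborFinset y) ∩ S).erase x).card := by
        rw [card_erase_of_mem hx]
        have := hmin y hb.2.1
        omega
      exact Nat.mul_le_mul h1 h2
    · rw [if_neg hb, if_neg hb]
  calc k * k * eBF G S S
      = ∑ xy ∈ (univ : Finset (V × V)),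
          (if xy.1 ∈ S ∧ xy.2 ∈ S ∧ G.Adj xy.1 xy.2 then k * k else 0) := step6
    _ ≤ ∑ xy ∈ (univ : Finset (V × V)),
          ((univ : Finset (V × V)).filter (fun uv => cond uv xy)).card :=
        Finset.sum_le_sum fun xy _ => step7 xy
    _ = ∑ uv ∈ (univ : Finset (V × V)), ((univ : Finset (V × V)).filter (cond uv)).card :=
        step4.symm
    _ = ∑ uv ∈ Finset.univ.offDiag, ((univ : Finset (V × V)).filter (cond uv)).card := step3
    _ ≤ ∑ p ∈ Finset.univ.offDiag,
          eBF G ((G.neighborFinset p.1).erase p.2) ((G.neighborFinset p.2).erase p.1) :=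
        Finset.sum_le_sum fun uv _ => step1 uv

end SparseAux


open Finset SparseAux

theorem stmt2 (f : ℝ → ℝ) (hf0 : ∀ x, 0 ≤ f x) (hfmono : Monotone f)
    (V : Type) [Fintype V] (G : SimpleGraph V)
    (s : Set V) (hbip : ∀ u v : V, G.Adj u v → (u ∈ s ↔ v ∉ s))
    (n : ℕ) (hn : n = Fintype.card V)
    (d : ℝ) (hd : d = 2 * G.edgeSet.ncard / n)
    (hd16 : 16 ≤ d)
    (hsparse : ∀ u v : V, u ≠ v → ∀ U W : Set V,
        U ⊆ G.neighborSet u \ {v} → W ⊆ G.neighborSet v \ {u} → Disjoint U W →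
        (edgesBetween G U W : ℝ) ≤ f ((U.ncard + W.ncard : ℕ) : ℝ)) :
    d ^ 3 ≤ 2 ^ 11 * n * f (2 * d) := by
  classical
  -- n is positive
  have hn0 : 0 < n := by
    rcases Nat.eq_zero_or_pos n with h | h
    · exfalso
      rw [h] at hd
      norm_num at hd
      rw [hd] at hd16
      norm_num at hd16
    · exact h
  have hn0' : (0:ℝ) < n := by exact_mod_cast hn0
  -- edge count
  set m : ℕ := G.edgeFinset.card with hmdef
  have hedge : G.edgeSet.ncard = m := by
    rw [← SimpleGraph.coe_edgeFinset, Set.ncard_coe_finset]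
  have hdm : (n:ℝ) * d = 2 * m := by
    rw [hd, hedge]
    field_simp
  have hsumdeg : ∑ u, G.degree u = 2 * m := G.sum_degrees_eq_twice_card_edges
  -- floor of d
  set t : ℕ := ⌊d⌋₊ with htdef
  have ht16 : 16 ≤ t := Nat.le_floor (by exact_mod_cast hd16)
  have ht0 : 0 < t := by omega
  have ht0' : (0:ℝ) < t := by exact_mod_cast ht0
  have htd : (t:ℝ) ≤ d := Nat.floor_le (by linarith)
  have htd2 : d < t + 1 := Nat.lt_floor_add_one d
  -- k
  set k : ℕ := ⌈d/4⌉₊ - 1 with hkdef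
  have hceil1 : 1 ≤ ⌈d/4⌉₊ := by
    rw [Nat.one_le_ceil_iff]
    linarith
  have hkcast : (k:ℝ) = (⌈d/4⌉₊ : ℝ) - 1 := by
    rw [hkdef]
    push_cast [Nat.cast_sub hceil1]
    ring
  have hk8 : (d/8 : ℝ) ≤ k := by
    have h1 : d/4 ≤ (⌈d/4⌉₊ : ℝ) := Nat.le_ceil _
    rw [hkcast]
    linarith
  have hk4 : (k:ℝ) < d/4 := by
    have h1 : (⌈d/4⌉₊ : ℝ) < d/4 + 1 := Nat.ceil_lt_add_one (by linarith)
    rw [hkcast]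
    linarith
  -- finset version of the sparseness hypothesis
  have hspF : ∀ u v : V, u ≠ v → ∀ U W : Finset V, ↑U ⊆ G.neighborSet u \ {v} →
      ↑W ⊆ G.neighborSet v \ {u} → Disjoint U W →
      (eBF G U W : ℝ) ≤ f ((U.card + W.card : ℕ) : ℝ) := by
    intro u v huv U W hU hW hdis
    have h := hsparse u v huv ↑U ↑W hU hW (Finset.disjoint_coe.mpr hdis)
    rwa [edgesBetween_coe, Set.ncard_coe_finset, Set.ncard_coe_finset] at h
  -- the central quantity
  set Q : ℕ := ∑ p ∈ Finset.univ.offDiag,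
      eBF G ((G.neighborFinset p.1).erase p.2) ((G.neighborFinset p.2).erase p.1) with hQdef
  -- UPPER BOUND on Q
  have hQup : (Q:ℝ) ≤ (∑ u : V, (cdiv t (G.degree u) : ℝ))^2 * f (2*(t:ℝ)) := by
    have hpair : ∀ p ∈ (Finset.univ.offDiag : Finset (V × V)),
        (eBF G ((G.neighborFinset p.1).erase p.2) ((G.neighborFinset p.2).erase p.1) : ℝ) ≤
          (cdiv t (G.degree p.1) : ℝ) * (cdiv t (G.degree p.2) : ℝ) * f (2*(t:ℝ)) := by
      intro p hp
      have hne : p.1 ≠ p.2 := (Finset.mem_offDiag.mp hp).2.2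
      exact pair_bound G f hf0 hfmono t ht0 s hbip p.1 p.2 (hspF _ _ hne)
    calc (Q:ℝ) = ∑ p ∈ Finset.univ.offDiag,
        (eBF G ((G.neighborFinset p.1).erase p.2) ((G.neighborFinset p.2).erase p.1) : ℝ) := by
          rw [hQdef]; exact Nat.cast_sum _ _
      _ ≤ ∑ p ∈ Finset.univ.offDiag,
          (cdiv t (G.degree p.1) : ℝ) * (cdiv t (G.degree p.2) : ℝ) * f (2*(t:ℝ)) :=
            Finset.sum_le_sum hpair
      _ ≤ ∑ p ∈ (univ : Finset (V × V)),
          (cdiv t (G.degree p.1) : ℝ) * (cdiv t (G.degree p.2) : ℝ) * f (2*(t:ℝ)) := by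
            apply Finset.sum_le_sum_of_subset_of_nonneg (Finset.subset_univ _)
            intro p _ _
            have := hf0 (2*(t:ℝ))
            positivity
      _ = (∑ u : V, (cdiv t (G.degree u) : ℝ))^2 * f (2*(t:ℝ)) := by
            rw [← Finset.univ_product_univ, Finset.sum_product, sq, Finset.sum_mul_sum,
              Finset.sum_mul]
            exact Finset.sum_congr rfl fun u _ => by rw [Finset.sum_mul]
  -- bound the cdiv sum
  have hsumc : (∑ u : V, (cdiv t (G.degree u) : ℝ)) ≤ (33/16) * n := by
    have h1 : (∑ u : V, (cdiv t (G.degree u) : ℝ)) ≤ ∑ u : V, ((G.degree u : ℝ)/t + 1) :=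
      Finset.sum_le_sum fun u _ => cdiv_cast_le ht0
    have h2 : ∑ u : V, ((G.degree u : ℝ)/t + 1) = (∑ u : V, (G.degree u : ℝ))/t + n := by
      rw [Finset.sum_add_distrib, ← Finset.sum_div]
      simp [hn, Finset.card_univ]
    have h3 : (∑ u : V, (G.degree u : ℝ)) = 2 * m := by
      rw [← Nat.cast_sum, hsumdeg]
      push_cast
      ring
    have h4 : (2*(m:ℝ))/t ≤ (17/16) * n := by
      rw [← hdm, div_le_iff₀ ht0']
      have ht16' : (16:ℝ) ≤ t := by exact_mod_cast ht16
      have ha := mul_le_mul_of_nonneg_left htd2.le hn0'.le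
      nlinarith [ha, mul_nonneg hn0'.le (sub_nonneg.mpr ht16')]
    rw [h2, h3] at h1
    linarith
  -- LOWER BOUND on Q
  obtain ⟨S, hSsub, hSmin, hSdel⟩ := deletion G k (Fintype.card V) univ (le_of_eq Finset.card_univ)
  have hEuniv : eBF G univ univ = 2 * m := by
    rw [eBF_self_eq_sum]
    rw [← hsumdeg]
    refine Finset.sum_congr rfl fun x _ => ?_
    congr 1
    simp [Finset.inter_comm]
  have hcarduniv : (univ : Finset V).card = n := by rw [Finset.card_univ, hn]
  have hES : (n:ℝ) * d / 2 ≤ (eBF G S S : ℝ) := by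
    have h1 : 2 * m ≤ eBF G S S + 2 * k * n := by
      rw [← hEuniv]
      calc eBF G univ univ ≤ eBF G S S + 2 * k * (univ : Finset V).card := hSdel
        _ = eBF G S S + 2 * k * n := by rw [hcarduniv]
    have h2 : (2*(m:ℝ)) ≤ (eBF G S S : ℝ) + 2 * k * n := by exact_mod_cast h1
    rw [← hdm] at h2
    nlinarith
  have hlowN := lower_bound G s hbip S k hSmin
  have hklow : (0:ℝ) ≤ (k:ℝ) := by positivity
  have hQlow : (n:ℝ) * d^3 / 128 ≤ (Q:ℝ) := by
    have h1 : ((k * k * eBF G S S : ℕ) : ℝ) ≤ (Q:ℝ) := by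
      rw [hQdef]
      exact_mod_cast hlowN
    push_cast at h1
    have hd0 : (0:ℝ) < d := by linarith
    have h2 : (d/8) * (d/8) * ((n:ℝ) * d / 2) ≤ (k:ℝ) * k * (eBF G S S : ℝ) := by
      have ha : (0:ℝ) ≤ d/8 := by linarith
      have hb : (0:ℝ) ≤ (n:ℝ) * d / 2 := by positivity
      have := mul_le_mul (mul_le_mul hk8 hk8 ha hklow) hES hb (by positivity)
      linarith
    calc (n:ℝ) * d^3 / 128 = (d/8) * (d/8) * ((n:ℝ) * d / 2) := by ring
      _ ≤ (k:ℝ) * k * (eBF G S S : ℝ) := h2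
      _ ≤ (Q:ℝ) := h1
  -- COMBINE
  have hf2t : f (2*(t:ℝ)) ≤ f (2*d) := hfmono (by linarith)
  have hf2t0 : 0 ≤ f (2*(t:ℝ)) := hf0 _
  have hf2d0 : 0 ≤ f (2*d) := hf0 _
  have hsumc0 : (0:ℝ) ≤ ∑ u : V, (cdiv t (G.degree u) : ℝ) := by positivity
  have hfinal : (n:ℝ) * d^3 / 128 ≤ ((33/16) * n)^2 * f (2*d) := by
    have h1 : (∑ u : V, (cdiv t (G.degree u) : ℝ))^2 * f (2*(t:ℝ)) ≤
        ((33/16) * n)^2 * f (2*d) := by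
      have hsq : (∑ u : V, (cdiv t (G.degree u) : ℝ))^2 ≤ ((33/16) * n)^2 := by
        apply sq_le_sq'
        · linarith
        · exact hsumc
      calc (∑ u : V, (cdiv t (G.degree u) : ℝ))^2 * f (2*(t:ℝ))
          ≤ ((33/16) * n)^2 * f (2*(t:ℝ)) := mul_le_mul_of_nonneg_right hsq hf2t0
        _ ≤ ((33/16) * n)^2 * f (2*d) := mul_le_mul_of_nonneg_left hf2t (by positivity)
    linarith
  -- divide by n
  have hexp : ((33/16:ℝ) * n)^2 * f (2*d) = (1089/256) * ((n:ℝ)^2 * f (2*d)) := by ring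
  rw [hexp] at hfinal
  have haux : (0:ℝ) ≤ (n:ℝ)^2 * f (2*d) := mul_nonneg (sq_nonneg _) hf2d0
  have hgoal : (n:ℝ) * d^3 ≤ (n:ℝ) * (2^11 * n * f (2*d)) := by
    have hr : (n:ℝ) * (2^11 * n * f (2*d)) = 2048 * ((n:ℝ)^2 * f (2*d)) := by ring
    rw [hr]
    linarith only [hfinal, haux]
  exact le_of_mul_le_mul_left hgoal hn0'
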